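/- Let G be a simple graph on n ≥ 1 vertices with adjacency matrix A_G and clique number ω = ω(G), let J be the n×n all-ones matrix, and for a positive integer ℓ set Q_ℓ := A_G + (1/ℓ)J. Then max_{x ∈ Δ_n} x^T Q_ℓ x = 1 + (ω − ℓ)/(ℓω). Consequently, this maximum equals 1 if ℓ = ω, is strictly greater than 1 if ℓ < ω, and is strictly less than 1 if ℓ > ω. -/

import Mathlib

open Matrix

namespace MS5

open Finset

variable {n : ℕ}

/-- The quadratic form of the adjacency matrix as a double sum. -/
noncomputable def f (G : SimpleGraph (Fin n)) [DecidableRel G.Adj] (x : Fin n → ℝ) : ℝ :=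
  ∑ a, ∑ b, G.adjMatrix ℝ a b * (x a * x b)

lemma sum_ind_mul (i j : Fin n) (hij : i ≠ j) (g : Fin n → ℝ) :
    ∑ a, ((if a = i then (1:ℝ) else 0) - (if a = j then 1 else 0)) * g a = g i - g j := by
  simp [sub_mul, ite_mul, Finset.sum_sub_distrib, Finset.sum_ite_eq']


lemma mul_sum' (c : ℝ) (f : Fin n → ℝ) : ∑ b, c * f b = c * ∑ b, f b :=
  (Finset.mul_sum _ _ _).symm

lemma f_shift (G : SimpleGraph (Fin n)) [DecidableRel G.Adj] (x : Fin n → ℝ)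
    (i j : Fin n) (hij : i ≠ j) (hadj : ¬ G.Adj i j) (t : ℝ) :
    f G (fun k => x k + t * ((if k = i then 1 else 0) - (if k = j then 1 else 0)))
      = f G x + 2 * t * ((∑ b, G.adjMatrix ℝ i b * x b) - (∑ b, G.adjMatrix ℝ j b * x b)) := by
  have hsymm : ∀ a b, G.adjMatrix ℝ a b = G.adjMatrix ℝ b a := fun a b => by
    simp [SimpleGraph.adjMatrix_apply, G.adj_comm]
  have key : ∀ a b : Fin n,
      G.adjMatrix ℝ a b * ((x a + t * ((if a = i then (1:ℝ) else 0) - (if a = j then 1 else 0)))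
        * (x b + t * ((if b = i then (1:ℝ) else 0) - (if b = j then 1 else 0))))
      = G.adjMatrix ℝ a b * (x a * x b)
        + t * (((if a = i then (1:ℝ) else 0) - (if a = j then 1 else 0)) * (G.adjMatrix ℝ a b * x b))
        + t * (((if b = i then (1:ℝ) else 0) - (if b = j then 1 else 0)) * (G.adjMatrix ℝ a b * x a))
        + t * t * (((if a = i then (1:ℝ) else 0) - (if a = j then 1 else 0)) *
            (((if b = i then (1:ℝ) else 0) - (if b = j then 1 else 0)) * G.adjMatrix ℝ a b)) := by
    intro a b; ring
  unfold f
  rw [Finset.sum_congr rfl fun a _ => Finset.sum_congr rfl fun b _ => key a b]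
  simp only [Finset.sum_add_distrib]
  have h2 : ∑ a, ∑ b, t * (((if a = i then (1:ℝ) else 0) - (if a = j then 1 else 0))
      * (G.adjMatrix ℝ a b * x b))
      = t * ((∑ b, G.adjMatrix ℝ i b * x b) - (∑ b, G.adjMatrix ℝ j b * x b)) := by
    calc ∑ a, ∑ b, t * (((if a = i then (1:ℝ) else 0) - (if a = j then 1 else 0))
          * (G.adjMatrix ℝ a b * x b))
        = t * ∑ a, ∑ b, ((if a = i then (1:ℝ) else 0) - (if a = j then 1 else 0))
          * (G.adjMatrix ℝ a b * x b) := by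
          rw [← mul_sum']; exact Finset.sum_congr rfl fun a _ => mul_sum' t _
      _ = t * ∑ a, ((if a = i then (1:ℝ) else 0) - (if a = j then 1 else 0))
          * ∑ b, G.adjMatrix ℝ a b * x b := by
          congr 1; exact Finset.sum_congr rfl fun a _ => mul_sum' _ _
      _ = _ := by rw [sum_ind_mul i j hij]
  have h3 : ∑ a, ∑ b, t * (((if b = i then (1:ℝ) else 0) - (if b = j then 1 else 0))
      * (G.adjMatrix ℝ a b * x a))
      = t * ((∑ b, G.adjMatrix ℝ i b * x b) - (∑ b, G.adjMatrix ℝ j b * x b)) := by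
    rw [Finset.sum_comm]
    calc ∑ b, ∑ a, t * (((if b = i then (1:ℝ) else 0) - (if b = j then 1 else 0))
          * (G.adjMatrix ℝ a b * x a))
        = t * ∑ b, ∑ a, ((if b = i then (1:ℝ) else 0) - (if b = j then 1 else 0))
          * (G.adjMatrix ℝ a b * x a) := by
          rw [← mul_sum']; exact Finset.sum_congr rfl fun b _ => mul_sum' t _
      _ = t * ∑ b, ((if b = i then (1:ℝ) else 0) - (if b = j then 1 else 0))
          * ∑ a, G.adjMatrix ℝ b a * x a := by
          congr 1
          refine Finset.sum_congr rfl fun b _ => ?_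
          rw [← mul_sum']
          exact Finset.sum_congr rfl fun a _ => by rw [hsymm a b]
      _ = _ := by rw [sum_ind_mul i j hij]
  have hdiag : ∀ a : Fin n, G.adjMatrix ℝ a a = 0 := fun a => by simp
  have hAij : G.adjMatrix ℝ i j = 0 := by simp [SimpleGraph.adjMatrix_apply, hadj]
  have hAji : G.adjMatrix ℝ j i = 0 := by rw [hsymm]; exact hAij
  have h4 : ∑ a, ∑ b, t * t * (((if a = i then (1:ℝ) else 0) - (if a = j then 1 else 0)) *
      (((if b = i then (1:ℝ) else 0) - (if b = j then 1 else 0)) * G.adjMatrix ℝ a b)) = 0 := by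
    calc ∑ a, ∑ b, t * t * (((if a = i then (1:ℝ) else 0) - (if a = j then 1 else 0)) *
          (((if b = i then (1:ℝ) else 0) - (if b = j then 1 else 0)) * G.adjMatrix ℝ a b))
        = t * t * ∑ a, ((if a = i then (1:ℝ) else 0) - (if a = j then 1 else 0)) *
            ∑ b, ((if b = i then (1:ℝ) else 0) - (if b = j then 1 else 0)) * G.adjMatrix ℝ a b := by
          rw [← mul_sum']
          refine Finset.sum_congr rfl fun a _ => ?_
          rw [mul_sum' (t * t)]
          congr 1
          exact mul_sum' _ _
      _ = t * t * ∑ a, ((if a = i then (1:ℝ) else 0) - (if a = j then 1 else 0)) *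
            (G.adjMatrix ℝ a i - G.adjMatrix ℝ a j) := by
          congr 1
          exact Finset.sum_congr rfl fun a _ => by rw [sum_ind_mul i j hij]
      _ = t * t * ((G.adjMatrix ℝ i i - G.adjMatrix ℝ i j) -
            (G.adjMatrix ℝ j i - G.adjMatrix ℝ j j)) := by rw [sum_ind_mul i j hij]
      _ = 0 := by rw [hdiag, hdiag, hAij, hAji]; ring
  rw [h2, h3, h4]
  ring

lemma shift_step (G : SimpleGraph (Fin n)) [DecidableRel G.Adj] {x : Fin n → ℝ}
    (hx : ∀ k, 0 ≤ x k) (hs : ∑ k, x k = 1) {i j : Fin n} (hij : i ≠ j)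
    (hnadj : ¬ G.Adj i j) (hxi : x i ≠ 0)
    (hd : (∑ b, G.adjMatrix ℝ j b * x b) ≤ ∑ b, G.adjMatrix ℝ i b * x b) :
    ∃ y : Fin n → ℝ, (∀ k, 0 ≤ y k) ∧ (∑ k, y k = 1) ∧
      (univ.filter fun k => y k ≠ 0) ⊆ (univ.filter fun k => x k ≠ 0).erase j ∧
      f G x ≤ f G y := by
  set y : Fin n → ℝ :=
    fun k => x k + x j * ((if k = i then 1 else 0) - (if k = j then 1 else 0)) with hy
  have hyi : y i = x i + x j := by simp [hy, hij]
  have hyj : y j = 0 := by simp [hy, Ne.symm hij]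
  have hyk : ∀ k, k ≠ i → k ≠ j → y k = x k := by
    intro k hki hkj
    simp only [hy]; rw [if_neg hki, if_neg hkj]; ring
  refine ⟨y, ?_, ?_, ?_, ?_⟩
  · intro k
    rcases eq_or_ne k i with rfl | hki
    · rw [hyi]; exact add_nonneg (hx k) (hx j)
    rcases eq_or_ne k j with rfl | hkj
    · rw [hyj]
    · rw [hyk k hki hkj]; exact hx k
  · simp only [hy]
    rw [Finset.sum_add_distrib, hs, mul_sum' (x j)]
    have h0 : ∑ k, ((if k = i then (1:ℝ) else 0) - (if k = j then 1 else 0)) = 0 := by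
      simp [Finset.sum_sub_distrib, Finset.sum_ite_eq']
    rw [h0]; ring
  · intro k hk
    simp only [Finset.mem_filter, Finset.mem_univ, true_and] at hk
    rcases eq_or_ne k j with rfl | hkj
    · exact absurd hyj hk
    rw [Finset.mem_erase]
    refine ⟨hkj, ?_⟩
    simp only [Finset.mem_filter, Finset.mem_univ, true_and]
    rcases eq_or_ne k i with rfl | hki
    · exact hxi
    · rw [← hyk k hki hkj]; exact hk
  · have := f_shift G x i j hij hnadj (x j)
    rw [← hy] at this
    rw [this]
    have h1 : 0 ≤ 2 * x j * ((∑ b, G.adjMatrix ℝ i b * x b) - ∑ b, G.adjMatrix ℝ j b * x b) :=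
      mul_nonneg (by linarith [hx j]) (by linarith)
    linarith

lemma ms_aux (G : SimpleGraph (Fin n)) [DecidableRel G.Adj] :
    ∀ N : ℕ, ∀ x : Fin n → ℝ, (univ.filter fun k => x k ≠ 0).card ≤ N →
      (∀ k, 0 ≤ x k) → ∑ k, x k = 1 →
      f G x ≤ 1 - ((G.cliqueNum : ℝ))⁻¹ := by
  intro N
  induction N with
  | zero =>
    intro x hcard hx hs
    exfalso
    have hz : ∀ k, x k = 0 := by
      intro k
      by_contra h
      have hk : k ∈ univ.filter (fun k => x k ≠ 0) := by simp [h]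
      have := Finset.card_pos.mpr ⟨k, hk⟩
      omega
    rw [Finset.sum_congr rfl fun k _ => hz k] at hs
    simp at hs
  | succ N ih =>
    intro x hcard hx hs
    set S := univ.filter (fun k => x k ≠ 0) with hSdef
    by_cases hcl : ∀ a ∈ S, ∀ b ∈ S, a ≠ b → G.Adj a b
    · -- support is a clique
      have hclique : G.IsClique (S : Set (Fin n)) := by
        intro a ha b hb hab
        exact hcl a (by exact_mod_cast ha) b (by exact_mod_cast hb) hab
      have hcard_le : S.card ≤ G.cliqueNum :=
        SimpleGraph.IsClique.card_le_cliqueNum (tc := hclique)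
      have hne : S.Nonempty := by
        rcases Finset.eq_empty_or_nonempty S with h | h
        · exfalso
          have hz : ∀ k, x k = 0 := by
            intro k
            by_contra hk
            have : k ∈ S := by simp [hSdef, hk]
            simp [h] at this
          rw [Finset.sum_congr rfl fun k _ => hz k] at hs
          simp at hs
        · exact h
      have hSpos : 0 < S.card := Finset.card_pos.mpr hne
      have hSsum : ∑ k ∈ S, x k = 1 := by
        rw [hSdef, Finset.sum_filter_ne_zero, hs]
      -- f G x ≤ 1 - ∑ x^2
      have hstep : ∀ a b : Fin n, G.adjMatrix ℝ a b * (x a * x b)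
          ≤ (x a * x b) - (if a = b then x a * x b else 0) := by
        intro a b
        rcases eq_or_ne a b with rfl | hab
        · simp
        · rw [if_neg hab, sub_zero]
          have : G.adjMatrix ℝ a b ≤ 1 := by
            rw [SimpleGraph.adjMatrix_apply]; split <;> norm_num
          have hxy : 0 ≤ x a * x b := mul_nonneg (hx a) (hx b)
          nlinarith
      have hf1 : f G x ≤ 1 - ∑ k, x k * x k := by
        have : f G x ≤ ∑ a, ∑ b, ((x a * x b) - (if a = b then x a * x b else 0)) :=
          Finset.sum_le_sum fun a _ => Finset.sum_le_sum fun b _ => hstep a b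
        refine le_trans this (le_of_eq ?_)
        rw [Finset.sum_congr rfl fun a (_ : a ∈ univ) => Finset.sum_sub_distrib _ _]
        rw [Finset.sum_sub_distrib]
        congr 1
        · calc ∑ a, ∑ b, x a * x b = ∑ a, x a * ∑ b, x b :=
                Finset.sum_congr rfl fun a _ => mul_sum' (x a) x
            _ = 1 := by rw [hs]; simp [hs]
        · exact Finset.sum_congr rfl fun a _ => by rw [Finset.sum_ite_eq]; simp
      -- ∑ x^2 ≥ 1 / S.card ≥ 1/ω
      have hsq : (1:ℝ) ≤ (S.card : ℝ) * ∑ k ∈ S, x k ^ 2 := by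
        have := sq_sum_le_card_mul_sum_sq (s := S) (f := x)
        rw [hSsum] at this
        simpa using this
      have hsub : ∑ k ∈ S, x k ^ 2 ≤ ∑ k, x k * x k := by
        rw [Finset.sum_congr rfl fun k (_ : k ∈ S) => sq (x k)]
        exact Finset.sum_le_sum_of_subset_of_nonneg (Finset.subset_univ S)
          (fun k _ _ => mul_self_nonneg (x k))
      have hcardR : (0:ℝ) < (S.card : ℝ) := by exact_mod_cast hSpos
      have hωpos : (0:ℝ) < (G.cliqueNum : ℝ) := by
        have : 0 < G.cliqueNum := lt_of_lt_of_le hSpos hcard_le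
        exact_mod_cast this
      have h1 : ((G.cliqueNum : ℝ))⁻¹ ≤ ∑ k, x k * x k := by
        have h2 : ((S.card : ℝ))⁻¹ ≤ ∑ k ∈ S, x k ^ 2 := by
          rw [inv_le_iff_one_le_mul₀ hcardR]
          calc (1:ℝ) ≤ (S.card : ℝ) * ∑ k ∈ S, x k ^ 2 := hsq
            _ = (∑ k ∈ S, x k ^ 2) * (S.card : ℝ) := by ring
        have h3 : ((G.cliqueNum : ℝ))⁻¹ ≤ ((S.card : ℝ))⁻¹ := by
          apply inv_anti₀ hcardR
          exact_mod_cast hcard_le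
        linarith
      linarith
    · push_neg at hcl
      obtain ⟨i, hi, j, hj, hij, hnadj⟩ := hcl
      have hxi : x i ≠ 0 := by simpa [hSdef] using hi
      have hxj : x j ≠ 0 := by simpa [hSdef] using hj
      have hjS : j ∈ S := hj
      have hiS : i ∈ S := hi
      rcases le_total (∑ b, G.adjMatrix ℝ j b * x b) (∑ b, G.adjMatrix ℝ i b * x b)
        with hd | hd
      · obtain ⟨y, hy1, hy2, hy3, hy4⟩ := shift_step G hx hs hij hnadj hxi hd
        have hycard : (univ.filter fun k => y k ≠ 0).card ≤ N := by
          have hle := Finset.card_le_card hy3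
          rw [← hSdef] at hle
          have h5 := Finset.card_erase_of_mem hjS
          omega
        exact le_trans hy4 (ih y hycard hy1 hy2)
      · have hnadj' : ¬ G.Adj j i := fun h => hnadj h.symm
        obtain ⟨y, hy1, hy2, hy3, hy4⟩ := shift_step G hx hs (Ne.symm hij) hnadj' hxj hd
        have hycard : (univ.filter fun k => y k ≠ 0).card ≤ N := by
          have hle := Finset.card_le_card hy3
          rw [← hSdef] at hle
          have h5 := Finset.card_erase_of_mem hiS
          omega
        exact le_trans hy4 (ih y hycard hy1 hy2)

lemma ms (G : SimpleGraph (Fin n)) [DecidableRel G.Adj] (x : Fin n → ℝ)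
    (hx : ∀ k, 0 ≤ x k) (hs : ∑ k, x k = 1) :
    f G x ≤ 1 - ((G.cliqueNum : ℝ))⁻¹ := by
  refine ms_aux G (univ.filter fun k => x k ≠ 0).card x le_rfl hx hs

lemma cliqueNum_pos (G : SimpleGraph (Fin n)) (hn : 1 ≤ n) : 1 ≤ G.cliqueNum := by
  have v : Fin n := ⟨0, hn⟩
  have tc : G.IsClique ((({v} : Finset (Fin n))) : Set (Fin n)) := by
    rw [Finset.coe_singleton]
    exact Set.pairwise_singleton _ _
  have := SimpleGraph.IsClique.card_le_cliqueNum (tc := tc)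
  simpa using this

lemma exists_max (G : SimpleGraph (Fin n)) [DecidableRel G.Adj] (hn : 1 ≤ n) :
    ∃ x : Fin n → ℝ, (∀ k, 0 ≤ x k) ∧ (∑ k, x k = 1) ∧
      f G x = 1 - ((G.cliqueNum : ℝ))⁻¹ := by
  obtain ⟨s, hsclique⟩ := G.exists_isNClique_cliqueNum
  have hω : 1 ≤ G.cliqueNum := cliqueNum_pos G hn
  have hωR : (0:ℝ) < (G.cliqueNum : ℝ) := by exact_mod_cast hω
  have hcard : s.card = G.cliqueNum := hsclique.card_eq
  set c : ℝ := ((G.cliqueNum : ℝ))⁻¹ with hc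
  refine ⟨fun k => if k ∈ s then c else 0, ?_, ?_, ?_⟩
  · intro k; dsimp only; split
    · exact inv_nonneg.mpr hωR.le
    · exact le_refl 0
  · dsimp only
    rw [Finset.sum_ite_mem, Finset.univ_inter, Finset.sum_const, hcard]
    rw [nsmul_eq_mul]
    exact mul_inv_cancel₀ (ne_of_gt hωR)
  · have hA : ∀ a ∈ s, ∀ b ∈ s, G.adjMatrix ℝ a b = if a = b then 0 else 1 := by
      intro a ha b hb
      rcases eq_or_ne a b with rfl | hab
      · simp
      · rw [if_neg hab, SimpleGraph.adjMatrix_apply,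
          if_pos (hsclique.isClique (by exact_mod_cast ha) (by exact_mod_cast hb) hab)]
    have key : ∀ a b : Fin n, G.adjMatrix ℝ a b *
        ((if a ∈ s then c else 0) * (if b ∈ s then c else 0))
        = if a ∈ s then (if b ∈ s then G.adjMatrix ℝ a b * (c * c) else 0) else 0 := by
      intro a b
      by_cases ha : a ∈ s <;> by_cases hb : b ∈ s <;> simp [ha, hb] <;> ring
    unfold f
    rw [Finset.sum_congr rfl fun a (_ : a ∈ univ) => Finset.sum_congr rfl
      fun b (_ : b ∈ univ) => key a b]
    have outer : ∀ a : Fin n,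
        (∑ b, if a ∈ s then (if b ∈ s then G.adjMatrix ℝ a b * (c * c) else 0) else 0)
        = if a ∈ s then ∑ b ∈ s, G.adjMatrix ℝ a b * (c * c) else 0 := by
      intro a
      by_cases ha : a ∈ s <;> simp [ha, Finset.sum_ite_mem]
    rw [Finset.sum_congr rfl fun a _ => outer a]
    rw [Finset.sum_ite_mem, Finset.univ_inter]
    rw [Finset.sum_congr rfl fun a (ha : a ∈ s) => Finset.sum_congr rfl
      fun b (hb : b ∈ s) => by rw [hA a ha b hb]]
    have inner : ∀ a ∈ s, ∑ b ∈ s, (if a = b then (0:ℝ) else 1) * (c * c)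
        = (s.card : ℝ) * (c * c) - c * c := by
      intro a ha
      have : ∀ b : Fin n, (if a = b then (0:ℝ) else 1) * (c * c)
          = c * c - (if a = b then c * c else 0) := by
        intro b; split <;> ring
      rw [Finset.sum_congr rfl fun b _ => this b]
      rw [Finset.sum_sub_distrib, Finset.sum_const, Finset.sum_ite_eq, if_pos ha,
        nsmul_eq_mul]
    rw [Finset.sum_congr rfl inner, Finset.sum_const, nsmul_eq_mul, hcard, hc]
    have hne : (G.cliqueNum : ℝ) ≠ 0 := ne_of_gt hωR
    field_simp

lemma quad (G : SimpleGraph (Fin n)) [DecidableRel G.Adj] (c : ℝ) (x : Fin n → ℝ) :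
    x ⬝ᵥ (G.adjMatrix ℝ + c • Matrix.of (fun _ _ => (1:ℝ))).mulVec x
      = f G x + c * ((∑ k, x k) * (∑ k, x k)) := by
  simp only [dotProduct, Matrix.mulVec, Matrix.add_apply, Matrix.smul_apply,
    Matrix.of_apply, smul_eq_mul, mul_one]
  calc ∑ a, x a * ∑ b, (G.adjMatrix ℝ a b + c) * x b
      = ∑ a, ∑ b, (G.adjMatrix ℝ a b * (x a * x b) + c * (x a * x b)) := by
        refine Finset.sum_congr rfl fun a _ => ?_
        rw [Finset.mul_sum]
        exact Finset.sum_congr rfl fun b _ => by ring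
    _ = f G x + ∑ a, ∑ b, c * (x a * x b) := by
        rw [Finset.sum_congr rfl fun a (_ : a ∈ univ) => Finset.sum_add_distrib,
          Finset.sum_add_distrib]
        rfl
    _ = f G x + c * ((∑ k, x k) * (∑ k, x k)) := by
        congr 1
        calc ∑ a, ∑ b, c * (x a * x b)
            = ∑ a, c * (x a * ∑ b, x b) := by
              refine Finset.sum_congr rfl fun a _ => ?_
              rw [mul_sum' c]
              congr 1
              exact mul_sum' (x a) x
          _ = c * ((∑ k, x k) * (∑ k, x k)) := by
              rw [mul_sum' c]
              congr 1
              rw [← Finset.sum_mul]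

end MS5

open MS5 in
/-- With `Q_ℓ = A_G + (1/ℓ)J`, the maximum of `xᵀ Q_ℓ x` over the
standard simplex is `1 + (ω − ℓ)/(ℓω)`; consequently it equals 1 iff `ℓ = ω`, is
`> 1` if `ℓ < ω` and `< 1` if `ℓ > ω`. -/
theorem stmt_5 (n : ℕ) (hn : 1 ≤ n) (G : SimpleGraph (Fin n)) [DecidableRel G.Adj]
    (ℓ : ℕ) (hℓ : 0 < ℓ) :
    IsGreatest
      {y : ℝ | ∃ x : Fin n → ℝ, (∀ i, 0 ≤ x i) ∧ (∑ i, x i) = 1 ∧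
        y = x ⬝ᵥ (G.adjMatrix ℝ
              + (ℓ : ℝ)⁻¹ • Matrix.of (fun _ _ => (1 : ℝ))).mulVec x}
      (1 + ((G.cliqueNum : ℝ) - (ℓ : ℝ)) / ((ℓ : ℝ) * (G.cliqueNum : ℝ))) ∧
    (ℓ = G.cliqueNum →
      1 + ((G.cliqueNum : ℝ) - (ℓ : ℝ)) / ((ℓ : ℝ) * (G.cliqueNum : ℝ)) = 1) ∧
    (ℓ < G.cliqueNum →
      1 < 1 + ((G.cliqueNum : ℝ) - (ℓ : ℝ)) / ((ℓ : ℝ) * (G.cliqueNum : ℝ))) ∧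
    (G.cliqueNum < ℓ →
      1 + ((G.cliqueNum : ℝ) - (ℓ : ℝ)) / ((ℓ : ℝ) * (G.cliqueNum : ℝ)) < 1) := by
  have hω : 1 ≤ G.cliqueNum := cliqueNum_pos G hn
  have hωR : (0:ℝ) < (G.cliqueNum : ℝ) := by exact_mod_cast hω
  have hℓR : (0:ℝ) < (ℓ : ℝ) := by exact_mod_cast hℓ
  have hT : 1 + ((G.cliqueNum : ℝ) - (ℓ : ℝ)) / ((ℓ : ℝ) * (G.cliqueNum : ℝ))
      = 1 - ((G.cliqueNum : ℝ))⁻¹ + ((ℓ : ℝ))⁻¹ := by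
    field_simp
    ring
  refine ⟨⟨?_, ?_⟩, ?_, ?_, ?_⟩
  · obtain ⟨x, hx, hs, hf⟩ := exists_max G hn
    refine ⟨x, hx, hs, ?_⟩
    rw [quad, hf, hs, hT]; ring
  · rintro y ⟨x, hx, hs, rfl⟩
    rw [quad, hs, hT]
    have := ms G x hx hs
    nlinarith
  · intro h; rw [h]; simp
  · intro h
    have hlt : (ℓ : ℝ) < (G.cliqueNum : ℝ) := by exact_mod_cast h
    have : 0 < ((G.cliqueNum : ℝ) - (ℓ : ℝ)) / ((ℓ : ℝ) * (G.cliqueNum : ℝ)) :=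
      div_pos (by linarith) (mul_pos hℓR hωR)
    linarith
  · intro h
    have hlt : (G.cliqueNum : ℝ) < (ℓ : ℝ) := by exact_mod_cast h
    have : ((G.cliqueNum : ℝ) - (ℓ : ℝ)) / ((ℓ : ℝ) * (G.cliqueNum : ℝ)) < 0 :=
      div_neg_of_neg_of_pos (by linarith) (mul_pos hℓR hωR)
    linarith
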